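/- Let w_1, …, w_C ∈ ℝ^d, b ∈ ℝ^C, and fix a class label y ∈ {1, …, C}. Let f be a random vector in ℝ^d such that for every j ∈ {1, …, C} the scalar random variable (w_j − w_y)·f is Gaussian with mean m_j and variance τ_j² ≥ 0 (with the Gaussian of variance 0 understood as the Dirac mass; in particular m_y = 0 and τ_y = 0). Then the expected cross-entropy loss satisfies E[−log( exp(w_y·f + b_y) / ∑_{j=1}^C exp(w_j·f + b_j) )] ≤ log ∑_{j=1}^C exp( m_j + (b_j − b_y) + τ_j²/2 ). -/

import Mathlib

open MeasureTheory ProbabilityTheory Real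
open scoped RealInnerProductSpace NNReal ENNReal

lemma gaussianPDFReal_mul_exp (mm : ℝ) {v : ℝ≥0} (hv : v ≠ 0) (x : ℝ) :
    Real.exp x * gaussianPDFReal mm v x
      = Real.exp (mm + v / 2) * gaussianPDFReal (mm + v) v x := by
  have hv' : (v : ℝ) ≠ 0 := by exact_mod_cast hv
  simp only [gaussianPDFReal]
  rw [mul_left_comm, ← Real.exp_add, mul_left_comm, ← Real.exp_add]
  congr 2
  field_simp
  ring

lemma integrable_exp_gaussianReal (mm : ℝ) (v : ℝ≥0) :
    Integrable Real.exp (gaussianReal mm v) := by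
  by_cases hv : v = 0
  · subst hv
    rw [gaussianReal_zero_var]
    refine ⟨Real.continuous_exp.measurable.aestronglyMeasurable, ?_⟩
    rw [HasFiniteIntegral, lintegral_dirac' _ (by measurability)]
    exact ENNReal.coe_lt_top
  · rw [gaussianReal_of_var_ne_zero _ hv]
    have hpdf : gaussianPDF mm v
        = fun x => (((gaussianPDFReal mm v x).toNNReal : ℝ≥0∞)) := rfl
    rw [hpdf, integrable_withDensity_iff_integrable_smul
      ((measurable_gaussianPDFReal mm v).real_toNNReal)]
    have : (fun x => (Real.toNNReal (gaussianPDFReal mm v x)) • Real.exp x)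
        = fun x => Real.exp (mm + v / 2) * gaussianPDFReal (mm + v) v x := by
      funext x
      rw [NNReal.smul_def, smul_eq_mul, Real.coe_toNNReal _ (gaussianPDFReal_nonneg _ _ _),
        mul_comm, gaussianPDFReal_mul_exp mm hv]
    rw [this]
    exact (integrable_gaussianPDFReal _ _).const_mul _

lemma integral_exp_gaussianReal (mm : ℝ) (v : ℝ≥0) :
    ∫ x, Real.exp x ∂(gaussianReal mm v) = Real.exp (mm + v / 2) := by
  by_cases hv : v = 0
  · subst hv
    rw [gaussianReal_zero_var, integral_dirac]
    simp
  · rw [gaussianReal_of_var_ne_zero _ hv]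
    have hpdf : gaussianPDF mm v
        = fun x => (((gaussianPDFReal mm v x).toNNReal : ℝ≥0∞)) := rfl
    rw [hpdf, integral_withDensity_eq_integral_smul
      ((measurable_gaussianPDFReal mm v).real_toNNReal)]
    have : (fun x => (Real.toNNReal (gaussianPDFReal mm v x)) • Real.exp x)
        = fun x => Real.exp (mm + v / 2) * gaussianPDFReal (mm + v) v x := by
      funext x
      rw [NNReal.smul_def, smul_eq_mul, Real.coe_toNNReal _ (gaussianPDFReal_nonneg _ _ _),
        mul_comm, gaussianPDFReal_mul_exp mm hv]
    rw [this, integral_const_mul, integral_gaussianPDFReal_eq_one _ hv, mul_one]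

set_option maxHeartbeats 1000000 in
/-- Classifier weights `w 1, …, w C ∈ ℝ^d`, biases `b ∈ ℝ^C`, a true
class `y`, and a random feature vector `f` such that each scalar `(w j − w y)·f` is
Gaussian with mean `m j` and variance `τsq j` (Dirac at the mean when the variance is 0;
in particular `m y = 0` and `τsq y = 0`).  Then the expected cross-entropy loss is at most
`log ∑ j exp (m j + (b j − b y) + τsq j / 2)`. -/
theorem expected_cross_entropy_gaussian_augmentation_bound
    {Ω : Type*} [MeasurableSpace Ω] (μ : Measure Ω) [IsProbabilityMeasure μ]
    {d C : ℕ} (w : Fin C → EuclideanSpace ℝ (Fin d)) (b : Fin C → ℝ) (y : Fin C)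
    (f : Ω → EuclideanSpace ℝ (Fin d)) (hfmeas : Measurable f)
    (m : Fin C → ℝ) (τsq : Fin C → NNReal)
    (hlaw : ∀ j, μ.map (fun ω => ⟪w j - w y, f ω⟫) = gaussianReal (m j) (τsq j))
    (hmy : m y = 0) (hτy : τsq y = 0) :
    ∫ ω, -Real.log
        (Real.exp (⟪w y, f ω⟫ + b y) / ∑ j, Real.exp (⟪w j, f ω⟫ + b j)) ∂μ
      ≤ Real.log (∑ j, Real.exp (m j + (b j - b y) + (τsq j : ℝ) / 2)) := by
  classical
  have hXmeas : ∀ j : Fin C, Measurable (fun ω => ⟪w j - w y, f ω⟫) :=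
    fun j => measurable_const.inner hfmeas
  set G : Ω → ℝ := fun ω => ∑ j, Real.exp (⟪w j - w y, f ω⟫ + (b j - b y)) with hG
  have hterm_int : ∀ j : Fin C,
      Integrable (fun ω => Real.exp (⟪w j - w y, f ω⟫ + (b j - b y))) μ := by
    intro j
    have h1 : Integrable (fun ω => Real.exp (⟪w j - w y, f ω⟫)) μ := by
      have h := integrable_exp_gaussianReal (m j) (τsq j)
      rw [← hlaw j] at h
      exact (integrable_map_measure
        Real.continuous_exp.measurable.aestronglyMeasurable (hXmeas j).aemeasurable).mp h
    simpa [Real.exp_add] using h1.mul_const (Real.exp (b j - b y))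
  have hterm_eq : ∀ j : Fin C, ∫ ω, Real.exp (⟪w j - w y, f ω⟫ + (b j - b y)) ∂μ
      = Real.exp (m j + (b j - b y) + (τsq j : ℝ) / 2) := by
    intro j
    have h0 : ∫ ω, Real.exp (⟪w j - w y, f ω⟫) ∂μ
        = Real.exp (m j + (τsq j : ℝ) / 2) := by
      rw [← integral_exp_gaussianReal (m j) (τsq j), ← hlaw j,
        integral_map (hXmeas j).aemeasurable
          Real.continuous_exp.measurable.aestronglyMeasurable]
    calc ∫ ω, Real.exp (⟪w j - w y, f ω⟫ + (b j - b y)) ∂μ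
        = ∫ ω, Real.exp (⟪w j - w y, f ω⟫) * Real.exp (b j - b y) ∂μ := by
          simp [Real.exp_add]
      _ = (∫ ω, Real.exp (⟪w j - w y, f ω⟫) ∂μ) * Real.exp (b j - b y) :=
          integral_mul_const _ _
      _ = _ := by rw [h0, ← Real.exp_add]; congr 1; ring
  have hGint : Integrable G μ := integrable_finset_sum _ (fun j _ => hterm_int j)
  have hGeq : ∫ ω, G ω ∂μ = ∑ j, Real.exp (m j + (b j - b y) + (τsq j : ℝ) / 2) := by
    rw [hG, integral_finset_sum _ (fun j _ => hterm_int j)]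
    exact Finset.sum_congr rfl (fun j _ => hterm_eq j)
  have hG1 : ∀ ω, 1 ≤ G ω := by
    intro ω
    have hy : Real.exp (⟪w y - w y, f ω⟫ + (b y - b y)) = 1 := by
      simp
    calc (1 : ℝ) = Real.exp (⟪w y - w y, f ω⟫ + (b y - b y)) := hy.symm
      _ ≤ G ω := Finset.single_le_sum (f := fun j => Real.exp (⟪w j - w y, f ω⟫ + (b j - b y)))
          (fun j _ => (Real.exp_pos _).le) (Finset.mem_univ y)
  have hGmeas : Measurable G := by
    apply Finset.measurable_sum
    intro j _
    exact Real.measurable_exp.comp ((hXmeas j).add_const _)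
  have hpt : ∀ ω, -Real.log
      (Real.exp (⟪w y, f ω⟫ + b y) / ∑ j, Real.exp (⟪w j, f ω⟫ + b j))
      = Real.log (G ω) := by
    intro ω
    have hS : (0 : ℝ) < ∑ j, Real.exp (⟪w j, f ω⟫ + b j) :=
      Finset.sum_pos (fun j _ => Real.exp_pos _) ⟨y, Finset.mem_univ y⟩
    have hGe : G ω = (∑ j, Real.exp (⟪w j, f ω⟫ + b j)) * Real.exp (-(⟪w y, f ω⟫ + b y)) := by
      rw [hG, Finset.sum_mul]
      refine Finset.sum_congr rfl fun j _ => ?_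
      rw [← Real.exp_add]
      congr 1
      rw [inner_sub_left]
      ring
    rw [hGe, Real.log_mul hS.ne' (Real.exp_pos _).ne', Real.log_exp,
      Real.log_div (Real.exp_pos _).ne' hS.ne', Real.log_exp]
    ring
  have hlog_int : Integrable (fun ω => Real.log (G ω)) μ := by
    refine hGint.mono' (Real.measurable_log.comp hGmeas).aestronglyMeasurable ?_
    filter_upwards with ω
    rw [Real.norm_eq_abs, abs_of_nonneg (Real.log_nonneg (hG1 ω))]
    have h := Real.log_le_sub_one_of_pos (lt_of_lt_of_le one_pos (hG1 ω))
    linarith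
  have jensen : ∫ ω, Real.log (G ω) ∂μ ≤ Real.log (∫ ω, G ω ∂μ) := by
    have hconc : ConcaveOn ℝ (Set.Ici (1 : ℝ)) Real.log :=
      (strictConcaveOn_log_Ioi.concaveOn).subset
        (fun x hx => Set.mem_Ioi.mpr (lt_of_lt_of_le one_pos (Set.mem_Ici.mp hx))) (convex_Ici 1)
    have hcont : ContinuousOn Real.log (Set.Ici 1) :=
      Real.continuousOn_log.mono (fun x hx => by
        simp only [Set.mem_compl_iff, Set.mem_singleton_iff]
        have : (1:ℝ) ≤ x := hx
        intro h; rw [h] at this; linarith)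
    exact hconc.le_map_integral hcont isClosed_Ici
      (ae_of_all _ (fun ω => hG1 ω)) hGint hlog_int
  calc ∫ ω, -Real.log
        (Real.exp (⟪w y, f ω⟫ + b y) / ∑ j, Real.exp (⟪w j, f ω⟫ + b j)) ∂μ
      = ∫ ω, Real.log (G ω) ∂μ := by
        exact integral_congr_ae (ae_of_all _ hpt)
    _ ≤ Real.log (∫ ω, G ω ∂μ) := jensen
    _ = _ := by rw [hGeq]
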